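/- Let f : ℝ → ℝ and g, g̃ : ℝ → ℝ be real analytic functions with g(0) = g̃(0) = 0. If f(x + g(y)) = f(x + g̃(y)) for all x, y ∈ ℝ, then either f is constant or g = g̃. -/
import Mathlib


theorem stmt_0 (f g g' : ℝ → ℝ)
    (hf : ∀ x, AnalyticAt ℝ f x) (hg : ∀ x, AnalyticAt ℝ g x)
    (hg' : ∀ x, AnalyticAt ℝ g' x)
    (hg0 : g 0 = 0) (hg'0 : g' 0 = 0)
    (heq : ∀ x y : ℝ, f (x + g y) = f (x + g' y)) :
    (∃ c : ℝ, ∀ x, f x = c) ∨ g = g' := by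
  by_cases hgg : g = g'
  · exact Or.inr hgg
  left
  set h : ℝ → ℝ := fun y => g y - g' y with hh
  obtain ⟨y₀, hy₀⟩ : ∃ y, h y ≠ 0 := by
    by_contra hc; push_neg at hc
    exact hgg (funext fun y => by have := hc y; simp only [hh] at this; linarith)
  have hcont : Continuous h := by
    exact (continuous_iff_continuousAt.2 fun x => (hg x).continuousAt).sub
      (continuous_iff_continuousAt.2 fun x => (hg' x).continuousAt)
  set P : ℝ → Prop := fun t => ∀ z, f (z + t) = f z with hP
  have hper : ∀ y, P (h y) := by
    intro y z
    have h1 : z + h y = (z - g' y) + g y := by simp only [hh]; ring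
    have h2 : z = (z - g' y) + g' y := by ring
    rw [h1, heq (z - g' y) y, ← h2]
  have Pneg : ∀ t, P t → P (-t) := by
    intro t ht z
    have := ht (z + -t)
    rw [add_assoc, neg_add_cancel, add_zero] at this
    exact this.symm
  have Pε : ∀ s, 0 ≤ s → s ≤ |h y₀| → P s := by
    intro s hs0 hsε
    have h0 : h 0 = 0 := by simp [hh, hg0, hg'0]
    have hiv := intermediate_value_uIcc (a := (0:ℝ)) (b := y₀) hcont.continuousOn
    rw [h0] at hiv
    rcases lt_or_gt_of_ne hy₀ with hneg | hpos
    · have hmem : -s ∈ Set.uIcc 0 (h y₀) := by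
        rw [abs_of_neg hneg] at hsε
        rw [Set.uIcc_of_ge hneg.le]
        constructor <;> linarith
      obtain ⟨y, _, hy⟩ := hiv hmem
      have := Pneg _ (hy ▸ hper y)
      rwa [neg_neg] at this
    · have hmem : s ∈ Set.uIcc 0 (h y₀) := by
        rw [abs_of_pos hpos] at hsε
        rw [Set.uIcc_of_le hpos.le]
        exact ⟨hs0, hsε⟩
      obtain ⟨y, _, hy⟩ := hiv hmem
      exact hy ▸ hper y
  have Pnsmul : ∀ (n : ℕ) (s : ℝ), P s → P (n * s) := by
    intro n s hs
    induction n with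
    | zero => intro z; simp
    | succ n ih =>
      intro z
      have : ((n : ℝ) + 1) * s = n * s + s := by ring
      push_cast
      rw [this, ← add_assoc, hs, ih z]
  have Ppos : ∀ x, 0 ≤ x → P x := by
    intro x hx
    have hε : 0 < |h y₀| := abs_pos.2 hy₀
    set n : ℕ := max 1 ⌈x / |h y₀|⌉₊ with hn
    have hn1 : 1 ≤ n := le_max_left _ _
    have hnpos : (0:ℝ) < n := by exact_mod_cast lt_of_lt_of_le one_pos hn1
    have hle : x / |h y₀| ≤ n := by
      calc x / |h y₀| ≤ ⌈x / |h y₀|⌉₊ := Nat.le_ceil _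
        _ ≤ n := by exact_mod_cast le_max_right _ _
    have hsle : x / n ≤ |h y₀| := by
      rw [div_le_iff₀ hnpos]
      rw [div_le_iff₀ hε] at hle
      linarith [hle]
    have hs0 : 0 ≤ x / n := div_nonneg hx hnpos.le
    have := Pnsmul n (x / n) (Pε _ hs0 hsle)
    rwa [mul_div_cancel₀ _ hnpos.ne'] at this
  have Pall : ∀ x, P x := by
    intro x
    rcases le_or_gt 0 x with hx | hx
    · exact Ppos x hx
    · have := Pneg _ (Ppos (-x) (by linarith))
      rwa [neg_neg] at this
  exact ⟨f 0, fun x => by have := Pall x 0; rwa [zero_add] at this⟩
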